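/- Let (Ω, P) be a probability space, σ > 0, θ ∈ ℝ, and let Y : Ω → ℝ be a random variable with law gaussian(θ, σ²) (the normal distribution with mean θ and variance σ²). Let R : Ω → E be measurable into a measurable space E, independent of Y, and let T : E → Set(ℝ) be a family of sets whose graph {(e, t) : t ∈ T(e)} is measurable in E × ℝ. Suppose P(Y ∈ T(R)) > 0. Then for every u ∈ [0,1]: P({F_TN(Y; θ, σ², T(R)) ≤ u} ∩ {Y ∈ T(R)}) = u · P(Y ∈ T(R)); equivalently, conditional on the event {Y ∈ T(R)}, the random variable F_TN(Y; θ, σ², T(R)) is uniformly distributed on (0,1). -/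

import Mathlib

open MeasureTheory ProbabilityTheory Set Filter Real Topology NNReal

/-- The truncated normal CDF: `F_TN(z; μ, σ², T)` is the Gaussian weight of `T ∩ (-∞, z]`
divided by the Gaussian weight of `T` (with value 0 when the denominator vanishes, matching
the Lean convention `x / 0 = 0`). -/
noncomputable def FTN (z μ σ2 : ℝ) (T : Set ℝ) : ℝ :=
  (∫ t in T ∩ Set.Iic z, Real.exp (-(t - μ) ^ 2 / (2 * σ2))) /
    (∫ t in T, Real.exp (-(t - μ) ^ 2 / (2 * σ2)))


section Helpers

variable {f : ℝ → ℝ}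

private lemma Hcont (hf : Integrable f) :
    Continuous fun z => ∫ t in Set.Iic z, f t := by
  rw [continuous_iff_continuousAt]
  intro x
  have key : Tendsto (fun z => ∫ t, (Set.Iic z).indicator f t) (𝓝 x)
      (𝓝 (∫ t, (Set.Iic x).indicator f t)) := by
    apply tendsto_integral_filter_of_dominated_convergence (fun t => ‖f t‖)
    · exact Eventually.of_forall fun z => (hf.indicator measurableSet_Iic).1
    · exact Eventually.of_forall fun z => ae_of_all _ fun t => norm_indicator_le_norm_self f t
    · exact hf.norm
    · have hne : ∀ᵐ (t : ℝ), t ≠ x := by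
        refine (ae_iff).mpr ?_
        simp [not_not]
      filter_upwards [hne] with t ht
      have : ∀ᶠ z in 𝓝 x, (Set.Iic z).indicator f t = (Set.Iic x).indicator f t := by
        rcases lt_or_gt_of_ne ht with h | h
        · filter_upwards [Ioi_mem_nhds h] with z hz
          rw [Set.indicator_of_mem (Set.mem_Iic.mpr (le_of_lt hz)), Set.indicator_of_mem (Set.mem_Iic.mpr (le_of_lt h))]
        · filter_upwards [Iio_mem_nhds h] with z hz
          rw [Set.indicator_of_notMem (by simpa using not_le.mpr hz), Set.indicator_of_notMem (by simpa using not_le.mpr h)]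
      exact Tendsto.congr' (this.mono fun z hz => hz.symm) tendsto_const_nhds
  have hrw : ∀ z : ℝ, (∫ t, (Set.Iic z).indicator f t) = ∫ t in Set.Iic z, f t :=
    fun z => integral_indicator measurableSet_Iic
  simpa only [ContinuousAt, hrw] using key

private lemma Hbot (hf : Integrable f) :
    Tendsto (fun z => ∫ t in Set.Iic z, f t) atBot (𝓝 0) := by
  have key : Tendsto (fun z => ∫ t, (Set.Iic z).indicator f t) atBot
      (𝓝 (∫ t : ℝ, (0 : ℝ))) := by
    apply tendsto_integral_filter_of_dominated_convergence (fun t => ‖f t‖)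
    · exact Eventually.of_forall fun z => (hf.indicator measurableSet_Iic).1
    · exact Eventually.of_forall fun z => ae_of_all _ fun t => norm_indicator_le_norm_self f t
    · exact hf.norm
    · refine ae_of_all _ fun t => ?_
      have : ∀ᶠ z in atBot, (Set.Iic z).indicator f t = (0 : ℝ) := by
        filter_upwards [eventually_lt_atBot t] with z hz
        exact Set.indicator_of_notMem (by simpa using not_le.mpr hz) f
      exact Tendsto.congr' (this.mono fun z hz => hz.symm) tendsto_const_nhds
  have hrw : ∀ z : ℝ, (∫ t, (Set.Iic z).indicator f t) = ∫ t in Set.Iic z, f t :=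
    fun z => integral_indicator measurableSet_Iic
  simpa only [hrw, integral_zero] using key

private lemma Htop (hf : Integrable f) :
    Tendsto (fun z => ∫ t in Set.Iic z, f t) atTop (𝓝 (∫ t, f t)) := by
  have key : Tendsto (fun z => ∫ t, (Set.Iic z).indicator f t) atTop
      (𝓝 (∫ t : ℝ, f t)) := by
    apply tendsto_integral_filter_of_dominated_convergence (fun t => ‖f t‖)
    · exact Eventually.of_forall fun z => (hf.indicator measurableSet_Iic).1
    · exact Eventually.of_forall fun z => ae_of_all _ fun t => norm_indicator_le_norm_self f t
    · exact hf.norm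
    · refine ae_of_all _ fun t => ?_
      have : ∀ᶠ z in atTop, (Set.Iic z).indicator f t = f t := by
        filter_upwards [eventually_ge_atTop t] with z hz
        exact Set.indicator_of_mem (Set.mem_Iic.mpr hz) f
      exact Tendsto.congr' (this.mono fun z hz => hz.symm) tendsto_const_nhds
  have hrw : ∀ z : ℝ, (∫ t, (Set.Iic z).indicator f t) = ∫ t in Set.Iic z, f t :=
    fun z => integral_indicator measurableSet_Iic
  simpa only [hrw] using key

private lemma Hmono (hf : Integrable f) (h0 : ∀ t, 0 ≤ f t) :
    Monotone fun z => ∫ t in Set.Iic z, f t := fun a b hab =>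
  setIntegral_mono_set hf.integrableOn (ae_of_all _ h0)
    (HasSubset.Subset.eventuallyLE (Set.Iic_subset_Iic.mpr hab))

private lemma level (hf : Integrable f) (h0 : ∀ t, 0 ≤ f t) {c : ℝ} (hc : 0 ≤ c) :
    ∫ t in {y : ℝ | (∫ s in Set.Iic y, f s) ≤ c}, f t = min c (∫ t, f t) := by
  set H : ℝ → ℝ := fun z => ∫ t in Set.Iic z, f t with hHdef
  set M : Set ℝ := {y : ℝ | H y ≤ c} with hMdef
  have hI : 0 ≤ ∫ t, f t := integral_nonneg h0
  have hHle : ∀ z, H z ≤ ∫ t, f t := fun z => setIntegral_le_integral hf (ae_of_all _ h0)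
  have hcont : Continuous H := Hcont hf
  have hmono : Monotone H := Hmono hf h0
  have hMclosed : IsClosed M := isClosed_le hcont continuous_const
  by_cases hMe : M = ∅
  · have hc0 : c = 0 := by
      refine le_antisymm ?_ hc
      by_contra hpos
      push_neg at hpos
      obtain ⟨z, hz⟩ := ((Hbot hf).eventually (eventually_lt_nhds hpos)).exists
      have hzM : z ∈ M := le_of_lt hz
      rw [hMe] at hzM
      exact absurd hzM (Set.notMem_empty z)
    rw [hMe, hc0, min_eq_left hI]
    simp
  · by_cases hMu : M = Set.univ
    · have hcI : ∫ t, f t ≤ c := by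
        refine le_of_tendsto (Htop hf) (Eventually.of_forall fun z => ?_)
        have : z ∈ M := hMu ▸ Set.mem_univ z
        exact this
      rw [hMu, min_eq_right hcI, setIntegral_univ]
    · -- M nonempty, proper
      have hne : M.Nonempty := Set.nonempty_iff_ne_empty.mpr hMe
      obtain ⟨z₀, hz₀⟩ : ∃ z₀, z₀ ∉ M := by
        by_contra h
        push_neg at h
        exact hMu (Set.eq_univ_of_forall h)
      have hz₀c : c < H z₀ := lt_of_not_ge hz₀
      have hbdd : BddAbove M := by
        refine ⟨z₀, fun y hy => ?_⟩
        by_contra hlt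
        push_neg at hlt
        exact absurd (le_trans (hmono (le_of_lt hlt)) hy) (not_le.mpr hz₀c)
      set m := sSup M with hm
      have hmM : m ∈ M := hMclosed.csSup_mem hne hbdd
      have hMIic : M = Set.Iic m := by
        ext y
        constructor
        · exact fun hy => le_csSup hbdd hy
        · exact fun hy => le_trans (hmono hy) hmM
      have hHm : H m = c := by
        refine le_antisymm hmM ?_
        have hwt : Tendsto H (𝓝[>] m) (𝓝 (H m)) :=
          (hcont.continuousAt).continuousWithinAt
        refine ge_of_tendsto hwt ?_
        filter_upwards [self_mem_nhdsWithin] with z hz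
        have hzM : z ∉ M := by
          intro hzM
          exact absurd (le_csSup hbdd hzM) (not_le.mpr hz)
        exact le_of_lt (lt_of_not_ge hzM)
      have hcle : c ≤ ∫ t, f t := hHm ▸ hHle m
      rw [hMIic, min_eq_left hcle]
      exact hHm

end Helpers

private lemma fiber (θ σ2 : ℝ) (hσ2 : 0 < σ2) (v : ℝ≥0) (hv : (v : ℝ) = σ2)
    (S : Set ℝ) (hS : MeasurableSet S) {u : ℝ} (hu : u ∈ Set.Icc (0 : ℝ) 1) :
    gaussianReal θ v ({y : ℝ | FTN y θ σ2 S ≤ u} ∩ S) =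
      ENNReal.ofReal u * gaussianReal θ v S := by
  have hv0 : v ≠ 0 := by
    intro h
    apply ne_of_gt hσ2
    rw [← hv, h]
    simp
  set g : ℝ → ℝ := fun t => Real.exp (-(t - θ) ^ 2 / (2 * σ2)) with hgdef
  set C : ℝ := (Real.sqrt (2 * π * σ2))⁻¹ with hCdef
  have hCpos : 0 < C := by
    apply inv_pos.mpr
    apply Real.sqrt_pos.mpr
    positivity
  have hpdf : ∀ t, gaussianPDFReal θ v t = C * g t := by
    intro t
    rw [gaussianPDFReal, hv]
  have hg_int : Integrable g := by
    have h1 : Integrable (gaussianPDFReal θ v) := integrable_gaussianPDFReal θ v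
    have h2 : g = fun t => C⁻¹ * gaussianPDFReal θ v t := by
      funext t
      rw [hpdf t]
      field_simp
    rw [h2]
    exact h1.const_mul _
  have hg0 : ∀ t, 0 ≤ g t := fun t => le_of_lt (Real.exp_pos _)
  set f : ℝ → ℝ := S.indicator g with hfdef
  have hf_int : Integrable f := hg_int.indicator hS
  have hf0 : ∀ t, 0 ≤ f t := fun t => Set.indicator_nonneg (fun s _ => hg0 s) t
  set A : ℝ := ∫ t in S, g t with hAdef
  have hAf : (∫ t, f t) = A := by rw [hfdef, integral_indicator hS]
  have hA0 : 0 ≤ A := setIntegral_nonneg hS fun t _ => hg0 t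
  have hH : ∀ y : ℝ, (∫ t in Set.Iic y, f t) = ∫ t in S ∩ Set.Iic y, g t := by
    intro y
    rw [hfdef, setIntegral_indicator hS, Set.inter_comm]
  -- express gaussian measure of measurable subsets
  have hmeas : ∀ (B : Set ℝ), gaussianReal θ v B = ENNReal.ofReal (C * ∫ t in B, g t) := by
    intro B
    rw [gaussianReal_apply_eq_integral θ hv0]
    congr 1
    rw [← integral_const_mul]
    exact integral_congr_ae (ae_of_all _ fun t => hpdf t)
  rcases eq_or_lt_of_le hA0 with hA | hA
  · -- A = 0 : both sides vanish
    have hSzero : gaussianReal θ v S = 0 := by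
      rw [hmeas S, ← hAdef, ← hA]
      simp
    have hle : gaussianReal θ v ({y : ℝ | FTN y θ σ2 S ≤ u} ∩ S) ≤ gaussianReal θ v S :=
      measure_mono Set.inter_subset_right
    rw [hSzero] at hle ⊢
    rw [le_antisymm hle zero_le']
    simp
  · -- A > 0
    have hset : {y : ℝ | FTN y θ σ2 S ≤ u} = {y : ℝ | (∫ t in Set.Iic y, f t) ≤ u * A} := by
      ext y
      simp only [Set.mem_setOf_eq, FTN, hH y, ← hgdef, ← hAdef]
      rw [div_le_iff₀ hA]
    have hc : 0 ≤ u * A := mul_nonneg hu.1 hA0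
    have hlevel : ∫ t in {y : ℝ | (∫ s in Set.Iic y, f s) ≤ u * A}, f t
        = min (u * A) (∫ t, f t) := level hf_int hf0 hc
    have huA : u * A ≤ ∫ t, f t := by
      rw [hAf]
      nlinarith [hu.2]
    rw [hset, hmeas, hmeas S, ← hAdef]
    have hind : (∫ t in ({y : ℝ | (∫ s in Set.Iic y, f s) ≤ u * A} ∩ S), g t)
        = ∫ t in {y : ℝ | (∫ s in Set.Iic y, f s) ≤ u * A}, f t := by
      rw [hfdef, setIntegral_indicator hS]
    rw [hind, hlevel, min_eq_left huA]
    rw [← ENNReal.ofReal_mul hu.1]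
    congr 1
    ring


/-- Pivotal quantity: if `Y ~ N(θ, σ²)`, `R` is independent of `Y`,
`T` is a measurable-graph family of truncation sets, and `P(Y ∈ T(R)) > 0`, then conditional
on `{Y ∈ T(R)}` the random variable `F_TN(Y; θ, σ², T(R))` is uniform on `(0,1)`:
for `u ∈ [0,1]`, `P({F_TN(Y; θ, σ², T(R)) ≤ u} ∩ {Y ∈ T(R)}) = u · P(Y ∈ T(R))`. -/
theorem stmt12 {Ω E : Type*} [MeasurableSpace Ω] [MeasurableSpace E]
    (P : Measure Ω) [IsProbabilityMeasure P]
    (σ θ : ℝ) (hσ : 0 < σ)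
    (Y : Ω → ℝ) (hY : Measurable Y)
    (hlaw : Measure.map Y P = gaussianReal θ ⟨σ ^ 2, sq_nonneg σ⟩)
    (R : Ω → E) (hR : Measurable R)
    (hindep : IndepFun Y R P)
    (T : E → Set ℝ)
    (hgraph : MeasurableSet {q : E × ℝ | q.2 ∈ T q.1})
    (hpos : 0 < P {ω | Y ω ∈ T (R ω)}) :
    ∀ u ∈ Set.Icc (0 : ℝ) 1,
      P ({ω | FTN (Y ω) θ (σ ^ 2) (T (R ω)) ≤ u} ∩ {ω | Y ω ∈ T (R ω)}) =
        ENNReal.ofReal u * P {ω | Y ω ∈ T (R ω)} := by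
  intro u hu
  have hσ2 : (0 : ℝ) < σ ^ 2 := by positivity
  set v : ℝ≥0 := ⟨σ ^ 2, sq_nonneg σ⟩ with hvdef
  set μg := gaussianReal θ v with hμg
  set ν := P.map R with hν
  haveI : IsProbabilityMeasure ν := Measure.isProbabilityMeasure_map hR.aemeasurable
  have hmap : P.map (fun ω => (R ω, Y ω)) = ν.prod μg := by
    have h := (indepFun_iff_map_prod_eq_prod_map_map hR.aemeasurable hY.aemeasurable).mp hindep.symm
    rw [h, hlaw]
  set g : ℝ → ℝ := fun t => Real.exp (-(t - θ) ^ 2 / (2 * σ ^ 2)) with hgdef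
  have hgm : Measurable g := by
    have : Continuous g := by
      rw [hgdef]; continuity
    exact this.measurable
  have hsec : ∀ e : E, MeasurableSet (T e) := fun e => measurable_prodMk_left hgraph
  have hset1 : MeasurableSet {q : (E × ℝ) × ℝ | q.2 ∈ T q.1.1 ∧ q.2 ≤ q.1.2} := by
    have h1 : MeasurableSet {q : (E × ℝ) × ℝ | q.2 ∈ T q.1.1} :=
      hgraph.preimage ((measurable_fst.comp measurable_fst).prodMk measurable_snd)
    have h2 : MeasurableSet {q : (E × ℝ) × ℝ | q.2 ≤ q.1.2} :=
      measurableSet_le measurable_snd (measurable_snd.comp measurable_fst)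
    exact h1.inter h2
  have hnum : Measurable fun p : E × ℝ => ∫ t in T p.1 ∩ Set.Iic p.2, g t := by
    have hF : StronglyMeasurable fun q : (E × ℝ) × ℝ =>
        ({q : (E × ℝ) × ℝ | q.2 ∈ T q.1.1 ∧ q.2 ≤ q.1.2}).indicator
          (fun q : (E × ℝ) × ℝ => g q.2) q :=
      ((hgm.comp measurable_snd).indicator hset1).stronglyMeasurable
    have hint := hF.integral_prod_right' (ν := (volume : Measure ℝ))
    have heq : (fun p : E × ℝ => ∫ t in T p.1 ∩ Set.Iic p.2, g t)
        = fun p : E × ℝ => ∫ t, ({q : (E × ℝ) × ℝ | q.2 ∈ T q.1.1 ∧ q.2 ≤ q.1.2}).indicator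
            (fun q : (E × ℝ) × ℝ => g q.2) (p, t) := by
      funext p
      rw [← integral_indicator ((hsec p.1).inter measurableSet_Iic)]
      congr 1
    rw [heq]
    exact hint.measurable
  have hden : Measurable fun p : E × ℝ => ∫ t in T p.1, g t := by
    have hF : StronglyMeasurable fun q : E × ℝ =>
        ({q : E × ℝ | q.2 ∈ T q.1}).indicator (fun q : E × ℝ => g q.2) q :=
      ((hgm.comp measurable_snd).indicator hgraph).stronglyMeasurable
    have hint := hF.integral_prod_right' (ν := (volume : Measure ℝ))
    have heq : (fun e : E => ∫ t in T e, g t)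
        = fun e : E => ∫ t, ({q : E × ℝ | q.2 ∈ T q.1}).indicator
            (fun q : E × ℝ => g q.2) (e, t) := by
      funext e
      rw [← integral_indicator (hsec e)]
      congr 1
    have : Measurable fun e : E => ∫ t in T e, g t := by
      rw [heq]; exact hint.measurable
    exact this.comp measurable_fst
  have hFTNm : Measurable fun p : E × ℝ => FTN p.2 θ (σ ^ 2) (T p.1) := by
    have : (fun p : E × ℝ => FTN p.2 θ (σ ^ 2) (T p.1))
        = fun p : E × ℝ => (∫ t in T p.1 ∩ Set.Iic p.2, g t) / (∫ t in T p.1, g t) := rfl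
    rw [this]
    exact hnum.div hden
  set Agr : Set (E × ℝ) := {q : E × ℝ | q.2 ∈ T q.1} with hAgrdef
  set Au : Set (E × ℝ) := {q : E × ℝ | FTN q.2 θ (σ ^ 2) (T q.1) ≤ u} ∩ Agr with hAudef
  have hAgrm : MeasurableSet Agr := hgraph
  have hAum : MeasurableSet Au := (hFTNm measurableSet_Iic).inter hgraph
  have e1 : {ω | FTN (Y ω) θ (σ ^ 2) (T (R ω)) ≤ u} ∩ {ω | Y ω ∈ T (R ω)}
      = (fun ω => (R ω, Y ω)) ⁻¹' Au := rfl
  have e2 : {ω | Y ω ∈ T (R ω)} = (fun ω => (R ω, Y ω)) ⁻¹' Agr := rfl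
  rw [e1, e2, ← Measure.map_apply (hR.prodMk hY) hAum,
    ← Measure.map_apply (hR.prodMk hY) hAgrm, hmap,
    Measure.prod_apply hAum, Measure.prod_apply hAgrm,
    ← lintegral_const_mul' _ _ ENNReal.ofReal_ne_top]
  refine lintegral_congr fun e => ?_
  have hsecAu : Prod.mk e ⁻¹' Au = {y : ℝ | FTN y θ (σ ^ 2) (T e) ≤ u} ∩ T e := rfl
  have hsecAgr : Prod.mk e ⁻¹' Agr = T e := rfl
  rw [hsecAu, hsecAgr]
  exact fiber θ (σ ^ 2) hσ2 v rfl (T e) (hsec e) hu
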